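/- Fix real numbers T > 0 and M > 0, and fix constants a0 and m0 with 5/4 ≤ a0 and a0 + 1 < m0. Then there exist λ0 > 0 and C > 0 such that for every λ ≥ λ0, every s ≥ 1 and every t ∈ (0,T): s^{15/2} · λ^{20} · e^{−4 m0 s α̂(t) + 2 m0 s α*(t)} · ξ̂(t)^{15/2} ≤ C · e^{−2(1 + a0) s α*(t)}. -/

import Mathlib

open Filter Real


/-- The Carleman weight `α*(t) = (e^{12λM} − e^{10λM})/(t(T−t))⁵`. -/
noncomputable def alphaStar (T M lam t : ℝ) : ℝ :=
  (Real.exp (12 * lam * M) - Real.exp (10 * lam * M)) / (t * (T - t)) ^ 5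

/-- The Carleman weight `α̂(t) = (e^{12λM} − e^{11λM})/(t(T−t))⁵`. -/
noncomputable def alphaHat (T M lam t : ℝ) : ℝ :=
  (Real.exp (12 * lam * M) - Real.exp (11 * lam * M)) / (t * (T - t)) ^ 5

/-- The Carleman weight `ξ̂(t) = e^{11λM}/(t(T−t))⁵`. -/
noncomputable def xiHat (T M lam t : ℝ) : ℝ :=
  Real.exp (11 * lam * M) / (t * (T - t)) ^ 5

/-- Weight comparison used to absorb the `θ`-term in the proof of
Proposition 3.1 of the paper: for `5/4 ≤ a0` and `a0 + 1 < m0`,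
`s^{15/2} λ^{20} e^{−4m0 sα̂ + 2m0 sα*} ξ̂^{15/2} ≤ C e^{−2(1+a0)sα*}`. -/

-- auxiliary: x^(15/2) * exp(-c*x) ≤ (1/c)^(15/2) * 40321 for c, x > 0
lemma aux_rpow_exp_bound {c x : ℝ} (hc : 0 < c) (hx : 0 < x) :
    x ^ ((15:ℝ)/2) * Real.exp (-(c*x)) ≤ (1/c) ^ ((15:ℝ)/2) * 40321 := by
  set u : ℝ := c * x with hu
  have hu0 : 0 < u := mul_pos hc hx
  have hxu : x = u / c := by field_simp [hu]; linarith [hu]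
  have h1 : x ^ ((15:ℝ)/2) = (1/c) ^ ((15:ℝ)/2) * u ^ ((15:ℝ)/2) := by
    rw [hxu, div_eq_mul_one_div u c, mul_comm u (1/c),
      Real.mul_rpow (by positivity) hu0.le]
  have h2 : u ^ ((15:ℝ)/2) ≤ u ^ (8:ℕ) + 1 := by
    rcases le_total u 1 with h | h
    · have : u ^ ((15:ℝ)/2) ≤ 1 := Real.rpow_le_one hu0.le h (by norm_num)
      nlinarith [pow_nonneg hu0.le 8]
    · have : u ^ ((15:ℝ)/2) ≤ u ^ ((8:ℕ):ℝ) := by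
        apply Real.rpow_le_rpow_of_exponent_le h; norm_num
      rw [Real.rpow_natCast] at this
      linarith
  have h3 : (u ^ (8:ℕ) + 1) * Real.exp (-u) ≤ 40321 := by
    have hf : u ^ (8:ℕ) / (Nat.factorial 8 : ℝ) ≤ Real.exp u :=
      Real.pow_div_factorial_le_exp u hu0.le 8
    have hfact : ((Nat.factorial 8 : ℕ) : ℝ) = 40320 := by norm_num [Nat.factorial]
    rw [hfact] at hf
    have he : Real.exp (-u) = 1 / Real.exp u := by
      rw [Real.exp_neg]; ring
    have hep : 0 < Real.exp u := Real.exp_pos u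
    rw [he]
    rw [mul_one_div, div_le_iff₀ hep]
    have : Real.exp u ≥ 1 := Real.one_le_exp hu0.le
    nlinarith
  calc x ^ ((15:ℝ)/2) * Real.exp (-(c*x))
      = (1/c) ^ ((15:ℝ)/2) * (u ^ ((15:ℝ)/2) * Real.exp (-u)) := by
        rw [h1, hu]; ring
    _ ≤ (1/c) ^ ((15:ℝ)/2) * ((u ^ (8:ℕ) + 1) * Real.exp (-u)) := by
        have : (0:ℝ) ≤ (1/c) ^ ((15:ℝ)/2) := by positivity
        apply mul_le_mul_of_nonneg_left _ this
        exact mul_le_mul_of_nonneg_right h2 (Real.exp_pos _).le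
    _ ≤ (1/c) ^ ((15:ℝ)/2) * 40321 := by
        have : (0:ℝ) ≤ (1/c) ^ ((15:ℝ)/2) := by positivity
        exact mul_le_mul_of_nonneg_left h3 this

-- eventual condition 1: 4*m0 ≤ δ * exp(lam*M)
lemma aux_ev1 {M m0 δ : ℝ} (hM : 0 < M) (hδ : 0 < δ) :
    ∀ᶠ lam in atTop, 4 * m0 ≤ δ * Real.exp (lam * M) := by
  have hmul : Tendsto (fun lam : ℝ => lam * M) atTop atTop :=
    Tendsto.atTop_mul_const hM tendsto_id
  have hcomp : Tendsto (fun lam : ℝ => Real.exp (lam * M)) atTop atTop :=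
    Real.tendsto_exp_atTop.comp hmul
  filter_upwards [hcomp.eventually_ge_atTop (4 * m0 / δ)] with lam hl
  rw [div_le_iff₀ hδ] at hl
  linarith

-- eventual condition 2: lam^20 ≤ exp (c * exp(11*lam*M) / Dmax)
lemma aux_ev2 {M c Dmax : ℝ} (hM : 0 < M) (hc : 0 < c) (hDmax : 0 < Dmax) :
    ∀ᶠ lam in atTop, (lam:ℝ) ^ 20 ≤ Real.exp (c * Real.exp (11 * lam * M) / Dmax) := by
  have h1 : Tendsto (fun lam : ℝ => 11 * lam * M) atTop atTop := by
    have := Tendsto.atTop_mul_const (show (0:ℝ) < 11 * M by positivity)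
      (tendsto_id (α := ℝ))
    refine this.congr fun x => by simp [id]; ring
  have h2 : Tendsto (fun y : ℝ => Real.exp y / y) atTop atTop := by
    simpa using Real.tendsto_exp_div_pow_atTop 1
  have hgrow : Tendsto (fun lam : ℝ => Real.exp (11 * lam * M) / (11 * lam * M))
      atTop atTop := h2.comp h1
  filter_upwards [hgrow.eventually_ge_atTop (20 * Dmax / (11 * M * c)),
    eventually_ge_atTop (1:ℝ)] with lam h1' hlam1
  have hlam : 0 < lam := lt_of_lt_of_le one_pos hlam1
  have hy : 0 < 11 * lam * M := by positivity
  -- from h1' : 20*Dmax/(11*M*c) ≤ exp(11λM)/(11λM)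
  have key : 20 * Dmax * lam / c ≤ Real.exp (11 * lam * M) := by
    have h3 := (le_div_iff₀ hy).mp h1'
    have heq : 20 * Dmax / (11 * M * c) * (11 * lam * M) = 20 * Dmax * lam / c := by
      field_simp
    linarith [heq ▸ h3]
  have h20 : 20 * lam ≤ c * Real.exp (11 * lam * M) / Dmax := by
    rw [le_div_iff₀ hDmax]
    have := (div_le_iff₀ hc).mp key
    nlinarith
  calc lam ^ 20 ≤ Real.exp lam ^ 20 := by
        apply pow_le_pow_left₀ hlam.le
        linarith [Real.add_one_le_exp lam]
    _ = Real.exp ((20:ℕ) * lam) := by rw [Real.exp_nat_mul]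
    _ ≤ Real.exp (c * Real.exp (11 * lam * M) / Dmax) := by
        apply Real.exp_le_exp.mpr; push_cast; linarith

theorem weight_comparison_absorption (T M : ℝ) (hT : 0 < T) (hM : 0 < M)
    (a0 m0 : ℝ) (ha0 : 5 / 4 ≤ a0) (hm0 : a0 + 1 < m0) :
    ∃ lam0 > (0 : ℝ), ∃ C > (0 : ℝ),
      ∀ lam ≥ lam0, ∀ s ≥ (1 : ℝ), ∀ t ∈ Set.Ioo (0 : ℝ) T,
        s ^ ((15 : ℝ) / 2) * lam ^ 20 *
            Real.exp (-4 * m0 * s * alphaHat T M lam t +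
              2 * m0 * s * alphaStar T M lam t) *
            (xiHat T M lam t) ^ ((15 : ℝ) / 2) ≤
          C * Real.exp (-2 * (1 + a0) * s * alphaStar T M lam t) := by
  have hδ : (0:ℝ) < m0 - a0 - 1 := by linarith
  set δ : ℝ := m0 - a0 - 1 with hδdef
  set c : ℝ := δ / 2 with hcdef
  have hc : 0 < c := half_pos hδ
  set Dmax : ℝ := (T ^ 2 / 4) ^ 5 with hDmaxdef
  have hDmax : 0 < Dmax := by positivity
  obtain ⟨lam1, hlam1⟩ := eventually_atTop.mp ((aux_ev1 (m0 := m0) hM hδ).and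
    (aux_ev2 (c := c) (Dmax := Dmax) hM hc hDmax))
  refine ⟨max lam1 1, lt_of_lt_of_le one_pos (le_max_right _ _),
    (1/c) ^ ((15:ℝ)/2) * 40321, by positivity, ?_⟩
  intro lam hlam s hs t ht
  obtain ⟨ht0, htT⟩ := ht
  obtain ⟨hcond1, hcond2⟩ := hlam1 lam (le_trans (le_max_left _ _) hlam)
  have hlampos : (0:ℝ) < lam := lt_of_lt_of_le one_pos (le_trans (le_max_right _ _) hlam)
  have hs0 : (0:ℝ) < s := lt_of_lt_of_le one_pos hs
  set g : ℝ := t * (T - t) with hgdef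
  have hg : 0 < g := mul_pos ht0 (by linarith)
  set D : ℝ := g ^ 5 with hDdef
  have hD : 0 < D := by positivity
  have hgle : g ≤ T ^ 2 / 4 := by nlinarith [sq_nonneg (T - 2 * t)]
  have hDle : D ≤ Dmax := by
    rw [hDdef, hDmaxdef]; exact pow_le_pow_left₀ hg.le hgle 5
  set E12 : ℝ := Real.exp (12 * lam * M) with hE12
  set E11 : ℝ := Real.exp (11 * lam * M) with hE11
  set E10 : ℝ := Real.exp (10 * lam * M) with hE10
  have hE11p : 0 < E11 := Real.exp_pos _
  have hE10p : 0 < E10 := Real.exp_pos _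
  have hE1211 : E11 ≤ E12 := by
    apply Real.exp_le_exp.mpr; nlinarith
  -- condition (i) specialized: 4*m0*E11 ≤ δ*E12
  have hcond1' : 4 * m0 * E11 ≤ δ * E12 := by
    have h12 : E12 = Real.exp (lam * M) * E11 := by
      rw [hE12, hE11, ← Real.exp_add]; ring_nf
    rw [h12]
    have := mul_le_mul_of_nonneg_right hcond1 hE11p.le
    linarith [this]
  set x : ℝ := s * (E11 / D) with hxdef
  have hx : 0 < x := by positivity
  -- exponent bound
  have hexp : -4 * m0 * s * alphaHat T M lam t + 2 * m0 * s * alphaStar T M lam t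
      ≤ -(δ * x) + -2 * (1 + a0) * s * alphaStar T M lam t := by
    have hA : -4 * m0 * (E12 - E11) + 2 * m0 * (E12 - E10)
        + 2 * (1 + a0) * (E12 - E10) ≤ -(δ * E11) := by
      nlinarith [hE10p, hE1211, hδ]
    have hsD : (0:ℝ) ≤ s / D := by positivity
    have := mul_le_mul_of_nonneg_left hA hsD
    have e1 : alphaHat T M lam t = (E12 - E11) / D := rfl
    have e2 : alphaStar T M lam t = (E12 - E10) / D := rfl
    rw [e1, e2]
    have e3 : -4 * m0 * s * ((E12 - E11) / D) + 2 * m0 * s * ((E12 - E10) / D)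
        + 2 * (1 + a0) * s * ((E12 - E10) / D)
        = s / D * (-4 * m0 * (E12 - E11) + 2 * m0 * (E12 - E10)
          + 2 * (1 + a0) * (E12 - E10)) := by ring
    have e4 : -(δ * x) = s / D * (-(δ * E11)) := by rw [hxdef]; ring
    linarith [this, e3, e4]
  -- rewrite LHS
  have hξ : xiHat T M lam t = E11 / D := rfl
  have hmulrpow : s ^ ((15:ℝ)/2) * (E11 / D) ^ ((15:ℝ)/2) = x ^ ((15:ℝ)/2) := by
    rw [hxdef, Real.mul_rpow hs0.le (by positivity)]
  have hmain : s ^ ((15 : ℝ) / 2) * lam ^ 20 *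
      Real.exp (-4 * m0 * s * alphaHat T M lam t + 2 * m0 * s * alphaStar T M lam t) *
      (xiHat T M lam t) ^ ((15 : ℝ) / 2)
      ≤ (x ^ ((15:ℝ)/2) * Real.exp (-(c*x))) * (lam ^ 20 * Real.exp (-(c*x)))
        * Real.exp (-2 * (1 + a0) * s * alphaStar T M lam t) := by
    rw [hξ]
    have hee : Real.exp (-4 * m0 * s * alphaHat T M lam t +
        2 * m0 * s * alphaStar T M lam t)
        ≤ Real.exp (-(c*x)) * Real.exp (-(c*x)) *
          Real.exp (-2 * (1 + a0) * s * alphaStar T M lam t) := by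
      rw [← Real.exp_add, ← Real.exp_add]
      apply Real.exp_le_exp.mpr
      have : -(c*x) + -(c*x) = -(δ * x) := by rw [hcdef]; ring
      linarith [hexp]
    calc s ^ ((15 : ℝ) / 2) * lam ^ 20 *
        Real.exp (-4 * m0 * s * alphaHat T M lam t + 2 * m0 * s * alphaStar T M lam t) *
        (E11 / D) ^ ((15 : ℝ) / 2)
        ≤ s ^ ((15 : ℝ) / 2) * lam ^ 20 *
          (Real.exp (-(c*x)) * Real.exp (-(c*x)) *
            Real.exp (-2 * (1 + a0) * s * alphaStar T M lam t)) *
          (E11 / D) ^ ((15 : ℝ) / 2) := by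
          apply mul_le_mul_of_nonneg_right _ (by positivity)
          exact mul_le_mul_of_nonneg_left hee (by positivity)
      _ = (s ^ ((15:ℝ)/2) * (E11 / D) ^ ((15:ℝ)/2)) * Real.exp (-(c*x)) *
          (lam ^ 20 * Real.exp (-(c*x)))
          * Real.exp (-2 * (1 + a0) * s * alphaStar T M lam t) := by ring
      _ = (x ^ ((15:ℝ)/2) * Real.exp (-(c*x))) * (lam ^ 20 * Real.exp (-(c*x)))
          * Real.exp (-2 * (1 + a0) * s * alphaStar T M lam t) := by
          rw [hmulrpow]
  refine le_trans hmain ?_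
  have hb1 : x ^ ((15:ℝ)/2) * Real.exp (-(c*x)) ≤ (1/c) ^ ((15:ℝ)/2) * 40321 :=
    aux_rpow_exp_bound hc hx
  have hb2 : lam ^ 20 * Real.exp (-(c*x)) ≤ 1 := by
    have hxge : E11 / Dmax ≤ x := by
      rw [hxdef]
      calc E11 / Dmax ≤ E11 / D := by
            apply div_le_div_of_nonneg_left hE11p.le hD hDle
        _ = 1 * (E11 / D) := (one_mul _).symm
        _ ≤ s * (E11 / D) := by
            apply mul_le_mul_of_nonneg_right hs (by positivity)
    have : Real.exp (-(c*x)) ≤ Real.exp (-(c * (E11/Dmax))) := by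
      apply Real.exp_le_exp.mpr
      have := mul_le_mul_of_nonneg_left hxge hc.le
      linarith
    calc lam ^ 20 * Real.exp (-(c*x)) ≤ lam ^ 20 * Real.exp (-(c * (E11/Dmax))) := by
          apply mul_le_mul_of_nonneg_left this (by positivity)
      _ ≤ Real.exp (c * E11 / Dmax) * Real.exp (-(c * (E11/Dmax))) := by
          apply mul_le_mul_of_nonneg_right _ (Real.exp_pos _).le
          exact hcond2
      _ = 1 := by rw [← Real.exp_add]; rw [show c * E11 / Dmax + -(c * (E11/Dmax)) = 0 by ring, Real.exp_zero]
  calc (x ^ ((15:ℝ)/2) * Real.exp (-(c*x))) * (lam ^ 20 * Real.exp (-(c*x)))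
      * Real.exp (-2 * (1 + a0) * s * alphaStar T M lam t)
      ≤ ((1/c) ^ ((15:ℝ)/2) * 40321) * 1
        * Real.exp (-2 * (1 + a0) * s * alphaStar T M lam t) := by
        apply mul_le_mul_of_nonneg_right _ (Real.exp_pos _).le
        apply mul_le_mul hb1 hb2 (by positivity) (by positivity)
    _ = ((1/c) ^ ((15:ℝ)/2) * 40321) * Real.exp (-2 * (1 + a0) * s * alphaStar T M lam t) := by
        ring
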